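/- Large-distance expansion of the areal coordinate: lim_{ρ→+∞} ρ·(r(ρ) − ρ) = −k̃² r_s² / 8; in particular r(ρ) − ρ → 0 as ρ → +∞, so the metric is asymptotically flat. -/

import Mathlib

open Real Filter Topology Set

private lemma hasDerivAt_osr (c u : ℝ) (hu : u < 1) :
    HasDerivAt (fun v : ℝ => (1 - v) ^ c) (-(c * (1 - u) ^ (c - 1))) u := by
  have h1 : HasDerivAt (fun v : ℝ => 1 - v) (-1) u := (hasDerivAt_id u).const_sub 1
  have h2 : HasDerivAt (fun x : ℝ => x ^ c) (c * (1 - u) ^ (c - 1)) (1 - u) :=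
    Real.hasDerivAt_rpow_const (Or.inl (by linarith))
  have := h2.comp u h1
  simpa [mul_comm, Function.comp_def] using this

private lemma tendsto_osr (c : ℝ) :
    Tendsto (fun u : ℝ => (1 - u) ^ c) (𝓝[>] (0:ℝ)) (𝓝 1) := by
  have h : ContinuousAt (fun u : ℝ => (1 - u) ^ c) 0 :=
    (continuousAt_const.sub continuousAt_id).rpow_const (Or.inl (by norm_num))
  have := h.tendsto.mono_left (nhdsWithin_le_nhds (s := Set.Ioi (0:ℝ)))
  simpa using this

private lemma hid_tendsto : Tendsto (fun u : ℝ => u) (𝓝[>] (0:ℝ)) (𝓝 0) :=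
  tendsto_id.mono_right nhdsWithin_le_nhds

private lemma key_lhopital (ζ p : ℝ) (hp : p = (ζ - 1) / 2) :
    Tendsto (fun u : ℝ => (ζ * u * (1 - u) ^ p - (1 - (1 - u) ^ ζ)) / u ^ 3)
      (𝓝[>] (0:ℝ)) (𝓝 (-(ζ * (ζ ^ 2 - 1)) / 24)) := by
  set N : ℝ → ℝ := fun u => ζ * u * (1 - u) ^ p - (1 - (1 - u) ^ ζ) with hN
  set N1 : ℝ → ℝ := fun u =>
    ζ * (1 - u) ^ p - ζ * p * u * (1 - u) ^ (p - 1) - ζ * (1 - u) ^ (ζ - 1) with hN1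
  set N2 : ℝ → ℝ := fun u =>
    -(2 * ζ * p) * (1 - u) ^ (p - 1) + ζ * p * (p - 1) * u * (1 - u) ^ (p - 2)
      + ζ * (ζ - 1) * (1 - u) ^ (ζ - 2) with hN2
  set N3 : ℝ → ℝ := fun u =>
    3 * ζ * p * (p - 1) * (1 - u) ^ (p - 2)
      - ζ * p * (p - 1) * (p - 2) * u * (1 - u) ^ (p - 3)
      - ζ * (ζ - 1) * (ζ - 2) * (1 - u) ^ (ζ - 3) with hN3
  have hEv : ∀ᶠ u in 𝓝[>] (0:ℝ), 0 < u ∧ u < 1 := by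
    filter_upwards [Ioo_mem_nhdsGT one_pos] with u hu
    exact ⟨hu.1, hu.2⟩
  have hpos : ∀ᶠ u in 𝓝[>] (0:ℝ), 0 < u :=
    eventually_mem_nhdsWithin
  -- derivative facts
  have hDN : ∀ u : ℝ, u < 1 → HasDerivAt N (N1 u) u := by
    intro u hu
    have a : HasDerivAt (fun v : ℝ => ζ * v) ζ u := by
      simpa using (hasDerivAt_id u).const_mul ζ
    have ab := a.mul (hasDerivAt_osr p u hu)
    have c : HasDerivAt (fun v : ℝ => 1 - (1 - v) ^ ζ)
        (-(-(ζ * (1 - u) ^ (ζ - 1)))) u := (hasDerivAt_osr ζ u hu).const_sub 1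
    have := ab.sub c
    refine this.congr_deriv ?_
    simp only [hN1]; ring
  have hDN1 : ∀ u : ℝ, u < 1 → HasDerivAt N1 (N2 u) u := by
    intro u hu
    have t1 := (hasDerivAt_osr p u hu).const_mul ζ
    have a : HasDerivAt (fun v : ℝ => ζ * p * v) (ζ * p) u := by
      simpa using (hasDerivAt_id u).const_mul (ζ * p)
    have t2 := a.mul (hasDerivAt_osr (p - 1) u hu)
    have t3 := (hasDerivAt_osr (ζ - 1) u hu).const_mul ζ
    have := (t1.sub t2).sub t3
    refine this.congr_deriv ?_
    simp only [hN2]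
    rw [show p - 1 - 1 = p - 2 from by ring, show ζ - 1 - 1 = ζ - 2 from by ring]
    ring
  have hDN2 : ∀ u : ℝ, u < 1 → HasDerivAt N2 (N3 u) u := by
    intro u hu
    have t1 := (hasDerivAt_osr (p - 1) u hu).const_mul (-(2 * ζ * p))
    have a : HasDerivAt (fun v : ℝ => ζ * p * (p - 1) * v) (ζ * p * (p - 1)) u := by
      simpa using (hasDerivAt_id u).const_mul (ζ * p * (p - 1))
    have t2 := a.mul (hasDerivAt_osr (p - 2) u hu)
    have t3 := (hasDerivAt_osr (ζ - 2) u hu).const_mul (ζ * (ζ - 1))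
    have := (t1.add t2).add t3
    refine this.congr_deriv ?_
    simp only [hN3]
    rw [show p - 1 - 1 = p - 2 from by ring, show p - 2 - 1 = p - 3 from by ring,
      show ζ - 2 - 1 = ζ - 3 from by ring]
    ring
  -- limit facts
  have hN0t : Tendsto N (𝓝[>] (0:ℝ)) (𝓝 0) := by
    have := ((hid_tendsto.const_mul ζ).mul (tendsto_osr p)).sub
      ((tendsto_const_nhds (x := (1:ℝ))).sub (tendsto_osr ζ))
    simpa [hN] using this
  have hN1t : Tendsto N1 (𝓝[>] (0:ℝ)) (𝓝 0) := by
    have := (((tendsto_osr p).const_mul ζ).sub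
      ((hid_tendsto.const_mul (ζ * p)).mul (tendsto_osr (p - 1)))).sub
      ((tendsto_osr (ζ - 1)).const_mul ζ)
    simpa [hN1, mul_assoc] using this
  have hN2t : Tendsto N2 (𝓝[>] (0:ℝ)) (𝓝 0) := by
    have := (((tendsto_osr (p - 1)).const_mul (-(2 * ζ * p))).add
      ((hid_tendsto.const_mul (ζ * p * (p - 1))).mul (tendsto_osr (p - 2)))).add
      ((tendsto_osr (ζ - 2)).const_mul (ζ * (ζ - 1)))
    have h2 : Tendsto N2 (𝓝[>] (0:ℝ))
        (𝓝 (-(2 * ζ * p) * 1 + ζ * p * (p - 1) * 0 * 1 + ζ * (ζ - 1) * 1)) := by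
      simpa [hN2, mul_assoc] using this
    convert h2 using 2
    rw [hp]; ring
  have hN3t : Tendsto (fun u => N3 u / 6) (𝓝[>] (0:ℝ)) (𝓝 (-(ζ * (ζ ^ 2 - 1)) / 24)) := by
    have := ((((tendsto_osr (p - 2)).const_mul (3 * ζ * p * (p - 1))).sub
      ((hid_tendsto.const_mul (ζ * p * (p - 1) * (p - 2))).mul (tendsto_osr (p - 3)))).sub
      ((tendsto_osr (ζ - 3)).const_mul (ζ * (ζ - 1) * (ζ - 2)))).div_const 6
    have h2 : Tendsto (fun u => N3 u / 6) (𝓝[>] (0:ℝ))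
        (𝓝 ((3 * ζ * p * (p - 1) * 1 - ζ * p * (p - 1) * (p - 2) * 0 * 1
          - ζ * (ζ - 1) * (ζ - 2) * 1) / 6)) := by
      simpa [hN3, mul_assoc] using this
    convert h2 using 2
    rw [hp]; ring
  -- L'Hopital chain
  have s2 : Tendsto (fun u => N2 u / (6 * u)) (𝓝[>] (0:ℝ)) (𝓝 (-(ζ * (ζ ^ 2 - 1)) / 24)) := by
    apply HasDerivAt.lhopital_zero_nhdsGT (f' := N3) (g' := fun _ => (6:ℝ))
    · filter_upwards [hEv] with u hu; exact hDN2 u hu.2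
    · filter_upwards with u; simpa using (hasDerivAt_id u).const_mul (6:ℝ)
    · filter_upwards with u; norm_num
    · exact hN2t
    · simpa using hid_tendsto.const_mul (6:ℝ)
    · exact hN3t
  have s3 : Tendsto (fun u => N1 u / (3 * u ^ 2)) (𝓝[>] (0:ℝ))
      (𝓝 (-(ζ * (ζ ^ 2 - 1)) / 24)) := by
    apply HasDerivAt.lhopital_zero_nhdsGT (f' := N2) (g' := fun u => 6 * u)
    · filter_upwards [hEv] with u hu; exact hDN1 u hu.2
    · filter_upwards with u
      have := (hasDerivAt_pow 2 u).const_mul (3:ℝ)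
      exact this.congr_deriv (by push_cast; ring)
    · filter_upwards [hpos] with u hu; positivity
    · exact hN1t
    · have := (hid_tendsto.pow 2).const_mul (3:ℝ)
      simpa using this
    · exact s2
  apply HasDerivAt.lhopital_zero_nhdsGT (f' := N1) (g' := fun u => 3 * u ^ 2)
  · filter_upwards [hEv] with u hu; exact hDN u hu.2
  · filter_upwards with u
    have := hasDerivAt_pow 3 u
    exact this.congr_deriv (by push_cast; ring)
  · filter_upwards [hpos] with u hu; positivity
  · exact hN0t
  · have := hid_tendsto.pow 3
    simpa using this
  · exact s3

private lemma key_denom (ζ : ℝ) (hζ : 0 < ζ) :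
    Tendsto (fun u : ℝ => (1 - (1 - u) ^ ζ) / u) (𝓝[>] (0:ℝ)) (𝓝 ζ) := by
  apply HasDerivAt.lhopital_zero_nhdsGT (f' := fun u => ζ * (1 - u) ^ (ζ - 1))
    (g' := fun _ => (1:ℝ))
  · filter_upwards [Ioo_mem_nhdsGT one_pos] with u hu
    have := (hasDerivAt_osr ζ u hu.2).const_sub 1
    exact this.congr_deriv (by ring)
  · filter_upwards with u; exact hasDerivAt_id u
  · filter_upwards with u; norm_num
  · have := (tendsto_const_nhds (x := (1:ℝ))).sub (tendsto_osr ζ)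
    simpa using this
  · exact hid_tendsto
  · have := ((tendsto_osr (ζ - 1)).const_mul ζ)
    simpa using this

/-- Large-distance expansion of the areal coordinate:
`lim_{ρ→+∞} ρ·(r(ρ) − ρ) = −k̃² r_s²/8`; in particular `r(ρ) − ρ → 0` as `ρ → +∞`,
so the metric is asymptotically flat. -/
theorem areal_coordinate_asymptotic_flatness
    (rs kt : ℝ) (hrs : 0 < rs)
    (ζ : ℝ) (hζ : ζ = Real.sqrt (1 + 3 * kt ^ 2))
    (r : ℝ → ℝ)
    (hr : ∀ ρ : ℝ, 0 < ρ → ρ ≠ rs → r ρ =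
      ζ * rs * |1 - rs / ρ| ^ ((ζ - 1) / 2) /
        |1 - Real.sign (1 - rs / ρ) * |1 - rs / ρ| ^ ζ|) :
    Tendsto (fun ρ : ℝ => ρ * (r ρ - ρ)) atTop (𝓝 (-(kt ^ 2 * rs ^ 2) / 8)) ∧
      Tendsto (fun ρ : ℝ => r ρ - ρ) atTop (𝓝 0) := by
  have hζ1 : 1 ≤ ζ := by
    rw [hζ]
    have h1 : (1:ℝ) ≤ 1 + 3 * kt ^ 2 := by nlinarith [sq_nonneg kt]
    calc (1:ℝ) = Real.sqrt 1 := (Real.sqrt_one).symm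
      _ ≤ Real.sqrt (1 + 3 * kt ^ 2) := Real.sqrt_le_sqrt h1
  have hζ0 : 0 < ζ := lt_of_lt_of_le one_pos hζ1
  have hζsq : ζ ^ 2 = 1 + 3 * kt ^ 2 := by
    rw [hζ]; exact Real.sq_sqrt (by nlinarith [sq_nonneg kt])
  set p : ℝ := (ζ - 1) / 2 with hp
  -- the substitution u = rs/ρ tends to 0⁺
  have hu : Tendsto (fun ρ : ℝ => rs / ρ) atTop (𝓝[>] (0:ℝ)) := by
    rw [tendsto_nhdsWithin_iff]
    constructor
    · exact tendsto_const_nhds.div_atTop tendsto_id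
    · filter_upwards [eventually_gt_atTop (0:ℝ)] with ρ hρ
      exact div_pos hrs hρ
  -- the limit function in u
  have hΦ : Tendsto (fun u : ℝ =>
      rs ^ 2 * (((ζ * u * (1 - u) ^ p - (1 - (1 - u) ^ ζ)) / u ^ 3) /
        ((1 - (1 - u) ^ ζ) / u))) (𝓝[>] (0:ℝ))
      (𝓝 (rs ^ 2 * ((-(ζ * (ζ ^ 2 - 1)) / 24) / ζ))) :=
    tendsto_const_nhds.mul ((key_lhopital ζ p hp).div (key_denom ζ hζ0) (ne_of_gt hζ0))
  have hmain : Tendsto (fun ρ : ℝ => ρ * (r ρ - ρ)) atTop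
      (𝓝 (-(kt ^ 2 * rs ^ 2) / 8)) := by
    have hcomp := hΦ.comp hu
    have hval : rs ^ 2 * ((-(ζ * (ζ ^ 2 - 1)) / 24) / ζ) = -(kt ^ 2 * rs ^ 2) / 8 := by
      have h3 : ζ ^ 2 - 1 = 3 * kt ^ 2 := by rw [hζsq]; ring
      have hζne : ζ ≠ 0 := ne_of_gt hζ0
      rw [h3]
      field_simp
      ring
    rw [hval] at hcomp
    refine hcomp.congr' ?_
    filter_upwards [eventually_gt_atTop (max rs 0), eventually_gt_atTop (0:ℝ)] with ρ hρ hρ0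
    have hρrs : rs < ρ := lt_of_le_of_lt (le_max_left _ _) hρ
    have hune : ρ ≠ rs := by linarith
    set u : ℝ := rs / ρ with hudef
    have hu0 : 0 < u := div_pos hrs hρ0
    have hu1 : u < 1 := (div_lt_one hρ0).mpr hρrs
    have hx0 : 0 < 1 - u := by linarith
    have hx1 : 1 - u < 1 := by linarith
    have hxz : (1 - u) ^ ζ < 1 := Real.rpow_lt_one (le_of_lt hx0) hx1 hζ0
    have hxzpos : (0:ℝ) < (1 - u) ^ ζ := Real.rpow_pos_of_pos hx0 ζ
    have hrw : r ρ = ζ * rs * (1 - u) ^ p / (1 - (1 - u) ^ ζ) := by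
      rw [hr ρ hρ0 hune]
      rw [show 1 - rs / ρ = 1 - u from rfl, Real.sign_of_pos hx0,
        abs_of_pos hx0, one_mul, abs_of_pos (by linarith : (0:ℝ) < 1 - (1 - u) ^ ζ)]
    have hDne : 1 - (1 - u) ^ ζ ≠ 0 := by linarith
    have hune' : u ≠ 0 := ne_of_gt hu0
    have hρne : ρ ≠ 0 := ne_of_gt hρ0
    have hρu : ρ = rs / u := by
      rw [hudef]; field_simp
    simp only [Function.comp]
    rw [hrw, hρu]
    have hrsne : rs ≠ 0 := ne_of_gt hrs
    field_simp
  refine ⟨hmain, ?_⟩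
  have hinv : Tendsto (fun ρ : ℝ => (ρ:ℝ)⁻¹) atTop (𝓝 0) := tendsto_inv_atTop_zero
  have h2 := hmain.mul hinv
  rw [mul_zero] at h2
  refine h2.congr' ?_
  filter_upwards [eventually_gt_atTop (0:ℝ)] with ρ hρ
  have : ρ ≠ 0 := ne_of_gt hρ
  field_simp
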